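/- Let S be a (possibly noncommutative) ring and R a commutative subring of S. If a matrix A ∈ Mat_n(R) is invertible in Mat_n(S), then det A (computed in R) is invertible in S. -/

import Mathlib

open Finset Equiv Matrix

section aux
variable {S : Type*} [Ring S]

lemma mem_ofFn_ex {m : ℕ} {F : Fin m → S} {x : S} (hx : x ∈ List.ofFn F) :
    ∃ i, F i = x := List.mem_ofFn.mp hx

/-- Expand an ordered product of sums into a sum over choice functions. -/
lemma listProd_sum {κ : Type*} [Fintype κ] :
    ∀ {m : ℕ} (F : Fin m → κ → S),
      (List.ofFn (fun i => ∑ k, F i k)).prod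
        = ∑ g : Fin m → κ, (List.ofFn fun i => F i (g i)).prod := by
  intro m
  induction m with
  | zero => intro F; simp
  | succ m ih =>
    intro F
    rw [List.ofFn_succ, List.prod_cons, ih (fun i k => F i.succ k), Finset.sum_mul_sum,
      ← (Fin.consEquiv (fun _ : Fin (m + 1) => κ)).sum_comp
        (fun g => (List.ofFn fun i => F i (g i)).prod), Fintype.sum_prod_type]
    refine Finset.sum_congr rfl fun k _ => Finset.sum_congr rfl fun g _ => ?_
    rw [List.ofFn_succ, List.prod_cons]
    simp [Fin.consEquiv]

/-- Split an ordered product of pairwise products `b i * a i` when each `a i`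
commutes with every `b j`. -/
lemma listProd_mul_split :
    ∀ {m : ℕ} (a b : Fin m → S), (∀ i j, Commute (a i) (b j)) →
      (List.ofFn fun i => b i * a i).prod = (List.ofFn b).prod * (List.ofFn a).prod := by
  intro m
  induction m with
  | zero => intro a b _; simp
  | succ m ih =>
    intro a b hc
    rw [List.ofFn_succ, List.ofFn_succ (f := b), List.ofFn_succ (f := a),
      List.prod_cons, List.prod_cons, List.prod_cons,
      ih (fun i => a i.succ) (fun i => b i.succ) (fun i j => hc _ _)]
    have h0 : Commute (a 0) (List.ofFn fun i => b i.succ).prod := by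
      apply Commute.list_prod_right
      intro x hx
      obtain ⟨i, rfl⟩ := mem_ofFn_ex hx
      exact hc 0 _
    rw [mul_assoc, mul_assoc, ← mul_assoc (a 0), h0.eq, mul_assoc]

end aux

/-- If `R` is a commutative subring of a ring `S` (encoded as an injective ring
homomorphism `f : R →+* S` from a commutative ring) and a matrix `A` over `R` is
invertible over `S`, then `det A` is invertible in `S`. -/
theorem det_isUnit_of_invertible_over_ring
    {R S : Type*} [CommRing R] [Ring S] (f : R →+* S) (hf : Function.Injective f)
    {n : ℕ} (A : Matrix (Fin n) (Fin n) R)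
    (h : ∃ B : Matrix (Fin n) (Fin n) S, A.map f * B = 1 ∧ B * A.map f = 1) :
    IsUnit (f A.det) := by
  classical
  obtain ⟨B, hAB, hBA⟩ := h
  set Ab := A.map f with hAb
  -- entries of `B` commute with the image of `f`
  have hcomm : ∀ (r : R) (i j : Fin n), Commute (f r) (B i j) := by
    intro r i j
    set D : Matrix (Fin n) (Fin n) S := Matrix.diagonal (fun _ => f r) with hD
    have h1 : Ab * D = D * Ab := by
      ext a b
      rw [hD, Matrix.mul_diagonal, Matrix.diagonal_mul, hAb, Matrix.map_apply,
        ← _root_.map_mul, ← _root_.map_mul, mul_comm]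
    have h2 : B * D = D * B := by
      calc B * D = (B * D) * (Ab * B) := by rw [hAB, mul_one]
        _ = B * (D * Ab) * B := by rw [mul_assoc, mul_assoc, mul_assoc]
        _ = B * (Ab * D) * B := by rw [h1]
        _ = (B * Ab) * (D * B) := by rw [mul_assoc, mul_assoc, mul_assoc]
        _ = D * B := by rw [hBA, one_mul]
    have h3 := congrFun (congrFun h2 i) j
    rw [hD, Matrix.mul_diagonal, Matrix.diagonal_mul] at h3
    exact h3.symm
  -- the candidate inverse
  set β : S := ∑ σ : Equiv.Perm (Fin n),
      ((Equiv.Perm.sign σ : ℤ) : S) * (List.ofFn fun i => B i (σ i)).prod with hβ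
  have key : β * f A.det = 1 := by
    have h1 : ∑ ρ : Equiv.Perm (Fin n),
        ((Equiv.Perm.sign ρ : ℤ) : S) * (List.ofFn fun i => (B * Ab) i (ρ i)).prod = 1 := by
      rw [hBA]
      rw [Finset.sum_eq_single (1 : Equiv.Perm (Fin n))]
      · have : (List.ofFn fun i => (1 : Matrix (Fin n) (Fin n) S) i
            ((1 : Equiv.Perm (Fin n)) i)).prod = 1 := by
          apply List.prod_eq_one
          intro x hx
          obtain ⟨i, rfl⟩ := mem_ofFn_ex hx
          exact Matrix.one_apply_eq i
        rw [this]
        simp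
      · intro ρ _ hρ
        obtain ⟨i, hi⟩ : ∃ i, ρ i ≠ i := by
          by_contra hcon
          push_neg at hcon
          exact hρ (Equiv.ext hcon)
        have hmem : (0 : S) ∈ List.ofFn fun i => (1 : Matrix (Fin n) (Fin n) S) i (ρ i) := by
          rw [List.mem_ofFn]
          exact ⟨i, by simp [Matrix.one_apply, Ne.symm hi]⟩
        rw [List.prod_eq_zero hmem, mul_zero]
      · simp
    have hdet : ∀ g : Fin n → Fin n, ((A.submatrix g id)ᵀ).det
        = ∑ ρ : Equiv.Perm (Fin n), ((Equiv.Perm.sign ρ : ℤ) : R) * ∏ i, A (g i) (ρ i) := by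
      intro g
      rw [Matrix.det_apply']
      rfl
    have h2 : ∑ ρ : Equiv.Perm (Fin n),
        ((Equiv.Perm.sign ρ : ℤ) : S) * (List.ofFn fun i => (B * Ab) i (ρ i)).prod
        = β * f A.det := by
      calc
        ∑ ρ : Equiv.Perm (Fin n),
            ((Equiv.Perm.sign ρ : ℤ) : S) * (List.ofFn fun i => (B * Ab) i (ρ i)).prod
          = ∑ ρ : Equiv.Perm (Fin n), ((Equiv.Perm.sign ρ : ℤ) : S) *
              (List.ofFn fun i => ∑ k, B i k * f (A k (ρ i))).prod := by
            simp only [Matrix.mul_apply, hAb, Matrix.map_apply]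
        _ = ∑ ρ : Equiv.Perm (Fin n), ∑ g : Fin n → Fin n, ((Equiv.Perm.sign ρ : ℤ) : S) *
              ((List.ofFn fun i => B i (g i)).prod
                * (List.ofFn fun i => f (A (g i) (ρ i))).prod) := by
            refine Finset.sum_congr rfl fun ρ _ => ?_
            rw [listProd_sum (fun i k => B i k * f (A k (ρ i))), Finset.mul_sum]
            refine Finset.sum_congr rfl fun g _ => ?_
            rw [listProd_mul_split (fun i => f (A (g i) (ρ i))) (fun i => B i (g i))
              (fun i j => hcomm _ _ _)]
        _ = ∑ g : Fin n → Fin n, (List.ofFn fun i => B i (g i)).prod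
              * f (((A.submatrix g id)ᵀ).det) := by
            rw [Finset.sum_comm]
            refine Finset.sum_congr rfl fun g _ => ?_
            have hfp : ∀ ρ : Equiv.Perm (Fin n),
                (List.ofFn fun i => f (A (g i) (ρ i))).prod = f (∏ i, A (g i) (ρ i)) := by
              intro ρ
              rw [show (List.ofFn fun i => f (A (g i) (ρ i)))
                  = (List.ofFn fun i => A (g i) (ρ i)).map f by rw [List.map_ofFn]; rfl,
                ← map_list_prod f, List.prod_ofFn]
            rw [hdet g, map_sum, Finset.mul_sum]
            refine Finset.sum_congr rfl fun ρ _ => ?_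
            rw [_root_.map_mul, map_intCast, hfp ρ, ← mul_assoc, ← mul_assoc,
              (Int.cast_commute ((Equiv.Perm.sign ρ : ℤ))
                ((List.ofFn fun i => B i (g i)).prod)).eq]
        _ = ∑ g ∈ Finset.univ.filter (fun g : Fin n → Fin n => Function.Bijective g),
              (List.ofFn fun i => B i (g i)).prod * f (((A.submatrix g id)ᵀ).det) := by
            refine (Finset.sum_subset (Finset.filter_subset _ _) fun g _ hg => ?_).symm
            have hnb : ¬ Function.Bijective g := by
              simpa only [Finset.mem_filter, Finset.mem_univ, true_and] using hg
            rw [← Finite.injective_iff_bijective] at hnb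
            rw [Function.Injective] at hnb
            push_neg at hnb
            obtain ⟨i, j, hgij, hij⟩ := hnb
            have : ((A.submatrix g id)ᵀ).det = 0 := by
              rw [Matrix.det_transpose]
              refine Matrix.det_zero_of_row_eq hij ?_
              funext k
              simp [Matrix.submatrix_apply, hgij]
            rw [this, map_zero, mul_zero]
        _ = ∑ τ : Equiv.Perm (Fin n),
              (List.ofFn fun i => B i (τ i)).prod * f (((A.submatrix (⇑τ) id)ᵀ).det) := by
            exact Finset.sum_bij (fun p h => Equiv.ofBijective p (Finset.mem_filter.1 h).2)
              (fun _ _ => Finset.mem_univ _)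
              (fun _ _ _ _ hh => by injection hh)
              (fun b _ => ⟨⇑b, Finset.mem_filter.2 ⟨Finset.mem_univ _, b.bijective⟩,
                Equiv.coe_fn_injective rfl⟩)
              (fun _ _ => rfl)
        _ = β * f A.det := by
            rw [hβ, Finset.sum_mul]
            refine Finset.sum_congr rfl fun τ _ => ?_
            rw [Matrix.det_transpose, Matrix.det_permute, _root_.map_mul, map_intCast, ← mul_assoc,
              (Int.cast_commute ((Equiv.Perm.sign τ : ℤ))
                ((List.ofFn fun i => B i (τ i)).prod)).eq, mul_assoc]
    rw [← h2, h1]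
  have hdβ : Commute (f A.det) β := by
    rw [hβ]
    apply Commute.sum_right
    intro σ _
    exact ((Int.cast_commute _ _).symm).mul_right (Commute.list_prod_right _ _ (fun x hx => by
      obtain ⟨i, rfl⟩ := mem_ofFn_ex hx
      exact hcomm _ _ _))
  exact ⟨⟨f A.det, β, by rw [hdβ.eq, key], key⟩, rfl⟩
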